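/- arXiv:1102.5401 — 3 statements merged into one kernel-verified Lean document; each statement's English description precedes it below -/
import Mathlib

section
/- Let F be an m×n matrix, B an m×p matrix, H an l×n matrix, Q₁ a positive definite symmetric p×p matrix and Q₂ a positive definite symmetric l×l matrix. Suppose ℓ ∈ ℝⁿ admits a representation ℓ = F'ẑ + H'Q₂Hp where (p, ẑ) solve the coupled system Fp = B Q₁⁻¹ B' ẑ and F'ẑ = ℓ − H'Q₂Hp. Then the number (ℓ, p) is nonnegative, i.e. ⟨ℓ, p⟩ ≥ 0. -/
open Matrix

theorem stmt1 {m n p l : ℕ} (F : Matrix (Fin m) (Fin n) ℝ) (B : Matrix (Fin m) (Fin p) ℝ)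
    (H : Matrix (Fin l) (Fin n) ℝ)
    (Q₁ : Matrix (Fin p) (Fin p) ℝ) (Q₂ : Matrix (Fin l) (Fin l) ℝ)
    (hQ₁ : Q₁.PosDef) (hQ₂ : Q₂.PosDef)
    (ℓ : Fin n → ℝ) (pv : Fin n → ℝ) (zh : Fin m → ℝ)
    (h1 : F.mulVec pv = (B * Q₁⁻¹ * Bᵀ).mulVec zh)
    (h2 : Fᵀ.mulVec zh = ℓ - (Hᵀ * Q₂ * H).mulVec pv)
    (hrep : ℓ = Fᵀ.mulVec zh + (Hᵀ * Q₂ * H).mulVec pv) :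
    0 ≤ ℓ ⬝ᵥ pv := by
  have hA : (B * Q₁⁻¹ * Bᵀ).PosSemidef := by
    have := (hQ₁.inv.posSemidef).mul_mul_conjTranspose_same B
    simpa using this
  have hC : (Hᵀ * Q₂ * H).PosSemidef := by
    have := (hQ₂.posSemidef).conjTranspose_mul_mul_same H
    simpa using this
  have e1 : Fᵀ.mulVec zh ⬝ᵥ pv = zh ⬝ᵥ F.mulVec pv := by
    rw [dotProduct_comm, Matrix.dotProduct_mulVec, Matrix.vecMul_transpose, dotProduct_comm]
  have t1 : 0 ≤ Fᵀ.mulVec zh ⬝ᵥ pv := by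
    rw [e1, h1]
    simpa using hA.dotProduct_mulVec_nonneg zh
  have t2 : 0 ≤ (Hᵀ * Q₂ * H).mulVec pv ⬝ᵥ pv := by
    rw [dotProduct_comm]
    simpa using hC.dotProduct_mulVec_nonneg pv
  calc (0:ℝ) ≤ Fᵀ.mulVec zh ⬝ᵥ pv + (Hᵀ * Q₂ * H).mulVec pv ⬝ᵥ pv := add_nonneg t1 t2
    _ = ℓ ⬝ᵥ pv := by rw [hrep, add_dotProduct]
end

section
/- Let F be an m×n matrix, B an m×p matrix, H an l×n matrix, Q₁ ∈ ℝ^{p×p} and Q₂ ∈ ℝ^{l×l} symmetric positive definite. If (p₁, z₁) and (p₂, z₂) both solve the system Fp = B Q₁⁻¹ B' z, F'z = ℓ − H'Q₂Hp for the same ℓ ∈ ℝⁿ, then Hp₁ = Hp₂, B'z₁ = B'z₂, and consequently ⟨ℓ, p₁⟩ = ⟨ℓ, p₂⟩. -/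
open Matrix

lemma posdef_eq_zero {k : ℕ} {M : Matrix (Fin k) (Fin k) ℝ} (hM : M.PosDef)
    {x : Fin k → ℝ} (h : x ⬝ᵥ M.mulVec x = 0) : x = 0 := by
  by_contra hx
  have := hM.dotProduct_mulVec_pos hx
  simp only [star_trivial] at this
  linarith

lemma posdef_nonneg {k : ℕ} {M : Matrix (Fin k) (Fin k) ℝ} (hM : M.PosDef)
    (x : Fin k → ℝ) : 0 ≤ x ⬝ᵥ M.mulVec x := by
  rcases eq_or_ne x 0 with rfl | hx
  · simp
  · have := hM.dotProduct_mulVec_pos hx; simp only [star_trivial] at this; linarith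

theorem stmt2 {m n p l : ℕ} (F : Matrix (Fin m) (Fin n) ℝ) (B : Matrix (Fin m) (Fin p) ℝ)
    (H : Matrix (Fin l) (Fin n) ℝ)
    (Q₁ : Matrix (Fin p) (Fin p) ℝ) (Q₂ : Matrix (Fin l) (Fin l) ℝ)
    (hQ₁ : Q₁.PosDef) (hQ₂ : Q₂.PosDef)
    (ℓ : Fin n → ℝ) (p₁ p₂ : Fin n → ℝ) (z₁ z₂ : Fin m → ℝ)
    (h11 : F.mulVec p₁ = (B * Q₁⁻¹ * Bᵀ).mulVec z₁)
    (h12 : Fᵀ.mulVec z₁ = ℓ - (Hᵀ * Q₂ * H).mulVec p₁)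
    (h21 : F.mulVec p₂ = (B * Q₁⁻¹ * Bᵀ).mulVec z₂)
    (h22 : Fᵀ.mulVec z₂ = ℓ - (Hᵀ * Q₂ * H).mulVec p₂) :
    H.mulVec p₁ = H.mulVec p₂ ∧ Bᵀ.mulVec z₁ = Bᵀ.mulVec z₂ ∧ ℓ ⬝ᵥ p₁ = ℓ ⬝ᵥ p₂ := by
  have hQ₁inv : Q₁⁻¹.PosDef := hQ₁.inv
  set δp := p₁ - p₂ with hδp
  set δz := z₁ - z₂ with hδz
  set w := Bᵀ.mulVec δz with hw
  set v := H.mulVec δp with hv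
  have hF : F.mulVec δp = (B * Q₁⁻¹ * Bᵀ).mulVec δz := by
    simp [hδp, hδz, Matrix.mulVec_sub, h11, h21]
  have hFt : Fᵀ.mulVec δz = -((Hᵀ * Q₂ * H).mulVec δp) := by
    simp [hδp, hδz, Matrix.mulVec_sub, h12, h22]
  have eB : (B * Q₁⁻¹ * Bᵀ).mulVec δz = B.mulVec (Q₁⁻¹.mulVec w) := by
    simp [hw, Matrix.mulVec_mulVec, Matrix.mul_assoc]
  have eH : ∀ x, (Hᵀ * Q₂ * H).mulVec x = Hᵀ.mulVec (Q₂.mulVec (H.mulVec x)) := by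
    intro x; simp [Matrix.mulVec_mulVec, Matrix.mul_assoc]
  have key1 : δz ⬝ᵥ F.mulVec δp = w ⬝ᵥ Q₁⁻¹.mulVec w := by
    rw [hF, eB, Matrix.dotProduct_mulVec, ← Matrix.mulVec_transpose]
  have key2 : δz ⬝ᵥ F.mulVec δp = -(v ⬝ᵥ Q₂.mulVec v) := by
    rw [Matrix.dotProduct_mulVec, ← Matrix.mulVec_transpose, hFt, eH,
      neg_dotProduct, Matrix.mulVec_transpose,
      ← Matrix.dotProduct_mulVec, dotProduct_comm, ← hv]
  have h1 : 0 ≤ w ⬝ᵥ Q₁⁻¹.mulVec w := posdef_nonneg hQ₁inv w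
  have h2 : 0 ≤ v ⬝ᵥ Q₂.mulVec v := posdef_nonneg hQ₂ v
  have hsum := key1.symm.trans key2
  have hw0 : w ⬝ᵥ Q₁⁻¹.mulVec w = 0 := by linarith
  have hv0 : v ⬝ᵥ Q₂.mulVec v = 0 := by linarith
  have hwz : w = 0 := posdef_eq_zero hQ₁inv hw0
  have hvz : v = 0 := posdef_eq_zero hQ₂ hv0
  refine ⟨?_, ?_, ?_⟩
  · have := hvz
    rw [hv, hδp, Matrix.mulVec_sub, sub_eq_zero] at this
    exact this
  · have := hwz
    rw [hw, hδz, Matrix.mulVec_sub, sub_eq_zero] at this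
    exact this
  · have hl : ℓ = Fᵀ.mulVec z₁ + (Hᵀ * Q₂ * H).mulVec p₁ := by rw [h12]; abel
    have t1 : Fᵀ.mulVec z₁ ⬝ᵥ δp = 0 := by
      rw [Matrix.mulVec_transpose, ← Matrix.dotProduct_mulVec, hF, eB, hwz]
      simp
    have t2 : (Hᵀ * Q₂ * H).mulVec p₁ ⬝ᵥ δp = 0 := by
      rw [eH, Matrix.mulVec_transpose, ← Matrix.dotProduct_mulVec, ← hv, hvz]
      simp
    have : ℓ ⬝ᵥ δp = 0 := by
      rw [hl, add_dotProduct, t1, t2, add_zero]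
    rw [hδp, dotProduct_sub, sub_eq_zero] at this
    exact this
end

section
/- Let F be an m×n matrix, B an m×p matrix, H an l×n matrix, with Q₁ (p×p) and Q₂ (l×l) symmetric positive definite, and let y ∈ ℝˡ. Suppose (x̂, p̂) solve F x̂ = B Q₁⁻¹ B' p̂ and F' p̂ = H' Q₂ (y − H x̂). Then x̂ is a minimizer over ℝⁿ × ℝᵖ (subject to Fx = Bf) of the functional J(x, f) = ⟨Q₁ f, f⟩ + ⟨Q₂ (y − Hx), y − Hx⟩; specifically, with f̂ = Q₁⁻¹ B' p̂ one has F x̂ = B f̂ and J(x̂, f̂) ≤ J(x, f) for all (x, f) with Fx = Bf. -/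
open Matrix

private lemma sym_dot {k : ℕ} (Q : Matrix (Fin k) (Fin k) ℝ) (hQ : Qᵀ = Q)
    (u v : Fin k → ℝ) : Q.mulVec u ⬝ᵥ v = Q.mulVec v ⬝ᵥ u := by
  rw [dotProduct_comm, dotProduct_mulVec, ← mulVec_transpose, hQ]

private lemma psd_dot {k : ℕ} (Q : Matrix (Fin k) (Fin k) ℝ) (hQ : Q.PosDef)
    (u : Fin k → ℝ) : 0 ≤ Q.mulVec u ⬝ᵥ u := by
  have := hQ.posSemidef.dotProduct_mulVec_nonneg u
  simpa [dotProduct_comm] using this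

theorem stmt8 {m n p l : ℕ} (F : Matrix (Fin m) (Fin n) ℝ) (B : Matrix (Fin m) (Fin p) ℝ)
    (H : Matrix (Fin l) (Fin n) ℝ)
    (Q₁ : Matrix (Fin p) (Fin p) ℝ) (Q₂ : Matrix (Fin l) (Fin l) ℝ)
    (hQ₁ : Q₁.PosDef) (hQ₂ : Q₂.PosDef) (y : Fin l → ℝ)
    (xhat : Fin n → ℝ) (phat : Fin m → ℝ)
    (h1 : F.mulVec xhat = (B * Q₁⁻¹ * Bᵀ).mulVec phat)
    (h2 : Fᵀ.mulVec phat = (Hᵀ * Q₂).mulVec (y - H.mulVec xhat)) :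
    F.mulVec xhat = B.mulVec ((Q₁⁻¹ * Bᵀ).mulVec phat) ∧
      ∀ (x : Fin n → ℝ) (f : Fin p → ℝ), F.mulVec x = B.mulVec f →
        Q₁.mulVec ((Q₁⁻¹ * Bᵀ).mulVec phat) ⬝ᵥ ((Q₁⁻¹ * Bᵀ).mulVec phat) +
            Q₂.mulVec (y - H.mulVec xhat) ⬝ᵥ (y - H.mulVec xhat) ≤
          Q₁.mulVec f ⬝ᵥ f + Q₂.mulVec (y - H.mulVec x) ⬝ᵥ (y - H.mulVec x) := by
  have hS1 : Q₁ᵀ = Q₁ := hQ₁.isHermitian.eq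
  have hS2 : Q₂ᵀ = Q₂ := hQ₂.isHermitian.eq
  set fhat : Fin p → ℝ := (Q₁⁻¹ * Bᵀ).mulVec phat with hfhat
  have hpart1 : F.mulVec xhat = B.mulVec fhat := by
    rw [h1, hfhat]
    simp [mulVec_mulVec, Matrix.mul_assoc]
  refine ⟨hpart1, ?_⟩
  -- Q₁ fhat = Bᵀ phat
  have hQf : Q₁.mulVec fhat = Bᵀ.mulVec phat := by
    rw [hfhat, mulVec_mulVec, ← Matrix.mul_assoc,
      Matrix.mul_nonsing_inv _ hQ₁.det_pos.ne'.isUnit, Matrix.one_mul]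
  intro x f hxf
  set a : Fin l → ℝ := y - H.mulVec xhat with ha
  set e : Fin l → ℝ := H.mulVec x - H.mulVec xhat with he
  set d : Fin p → ℝ := f - fhat with hd
  -- cross term: Q₁ fhat ⬝ d = Q₂ a ⬝ e
  have hcross : Q₁.mulVec fhat ⬝ᵥ d = Q₂.mulVec a ⬝ᵥ e := by
    have h3 : B.mulVec d = F.mulVec (x - xhat) := by
      rw [hd, mulVec_sub, mulVec_sub, hxf, hpart1]
    calc Q₁.mulVec fhat ⬝ᵥ d = Bᵀ.mulVec phat ⬝ᵥ d := by rw [hQf]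
      _ = phat ⬝ᵥ B.mulVec d := by
          rw [mulVec_transpose, ← dotProduct_mulVec]
      _ = phat ⬝ᵥ F.mulVec (x - xhat) := by rw [h3]
      _ = Fᵀ.mulVec phat ⬝ᵥ (x - xhat) := by
          rw [mulVec_transpose, ← dotProduct_mulVec]
      _ = (Hᵀ * Q₂).mulVec a ⬝ᵥ (x - xhat) := by rw [h2, ha]
      _ = Q₂.mulVec a ⬝ᵥ e := by
          rw [← mulVec_mulVec, mulVec_transpose, ← dotProduct_mulVec]
          simp [he, mulVec_sub]
  have hyx : y - H.mulVec x = a - e := by rw [ha, he]; abel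
  have hf : f = fhat + d := by rw [hd]; abel
  have exp1 : Q₁.mulVec f ⬝ᵥ f =
      Q₁.mulVec fhat ⬝ᵥ fhat + 2 * (Q₁.mulVec fhat ⬝ᵥ d) + Q₁.mulVec d ⬝ᵥ d := by
    rw [hf]
    simp only [mulVec_add, add_dotProduct, dotProduct_add]
    rw [sym_dot Q₁ hS1 d fhat]; ring
  have exp2 : Q₂.mulVec (y - H.mulVec x) ⬝ᵥ (y - H.mulVec x) =
      Q₂.mulVec a ⬝ᵥ a - 2 * (Q₂.mulVec a ⬝ᵥ e) + Q₂.mulVec e ⬝ᵥ e := by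
    rw [hyx]
    simp only [mulVec_sub, sub_dotProduct, dotProduct_sub]
    rw [sym_dot Q₂ hS2 e a]; ring
  have n1 : 0 ≤ Q₁.mulVec d ⬝ᵥ d := psd_dot Q₁ hQ₁ d
  have n2 : 0 ≤ Q₂.mulVec e ⬝ᵥ e := psd_dot Q₂ hQ₂ e
  rw [exp1, exp2]
  linarith [hcross]
end
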